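/- If A is an M×N perfect quaternion array with entries in {±1, ±i, ±j, ±k} and A = A_h + A_v·j, then the matrices A_h − A_v and A_h + A_v have all entries in {1, i, −1, −i} and form a periodic complementary pair: R_{A_h−A_v}(m,n) + R_{A_h+A_v}(m,n) = 0 for all (m,n) ≠ (0,0). -/

import Mathlib

noncomputable section
open scoped BigOperators

/-- Embedding of ℂ into the quaternions (zero j and k components). -/
def cq (z : ℂ) : Quaternion ℝ := ⟨z.re, z.im, 0, 0⟩

/-- The quaternion unit i. -/
def qi : Quaternion ℝ := ⟨0, 1, 0, 0⟩

/-- The quaternion unit j. -/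
def qj : Quaternion ℝ := ⟨0, 0, 1, 0⟩

/-- The quaternion unit k. -/
def qk : Quaternion ℝ := ⟨0, 0, 0, 1⟩

/-- Conjugate-free periodic cross-correlation of quaternion matrices. -/
def qcorr {M N : ℕ} [NeZero M] [NeZero N]
    (X Y : Matrix (ZMod M) (ZMod N) (Quaternion ℝ)) :
    Matrix (ZMod M) (ZMod N) (Quaternion ℝ) :=
  fun m n => ∑ k, ∑ l, X k l * Y (k + m) (l + n)

/-- Right periodic autocorrelation of a quaternion matrix. -/
def Rq {M N : ℕ} [NeZero M] [NeZero N]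
    (A : Matrix (ZMod M) (ZMod N) (Quaternion ℝ)) :
    Matrix (ZMod M) (ZMod N) (Quaternion ℝ) :=
  qcorr A (fun k l => star (A k l))

/-- Conjugate-free periodic cross-correlation of complex matrices. -/
def ccorr {M N : ℕ} [NeZero M] [NeZero N]
    (X Y : Matrix (ZMod M) (ZMod N) ℂ) : Matrix (ZMod M) (ZMod N) ℂ :=
  fun m n => ∑ k, ∑ l, X k l * Y (k + m) (l + n)

/-- Complex 2D periodic autocorrelation. -/
def Rc {M N : ℕ} [NeZero M] [NeZero N]
    (A : Matrix (ZMod M) (ZMod N) ℂ) : Matrix (ZMod M) (ZMod N) ℂ :=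
  ccorr A (fun k l => star (A k l))

@[simp] lemma cq_re (z : ℂ) : (cq z).re = z.re := rfl
@[simp] lemma cq_imI (z : ℂ) : (cq z).imI = z.im := rfl
@[simp] lemma cq_imJ (z : ℂ) : (cq z).imJ = 0 := rfl
@[simp] lemma cq_imK (z : ℂ) : (cq z).imK = 0 := rfl
@[simp] lemma qi_re : qi.re = 0 := rfl
@[simp] lemma qi_imI : qi.imI = 1 := rfl
@[simp] lemma qi_imJ : qi.imJ = 0 := rfl
@[simp] lemma qi_imK : qi.imK = 0 := rfl
@[simp] lemma qj_re : qj.re = 0 := rfl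
@[simp] lemma qj_imI : qj.imI = 0 := rfl
@[simp] lemma qj_imJ : qj.imJ = 1 := rfl
@[simp] lemma qj_imK : qj.imK = 0 := rfl
@[simp] lemma qk_re : qk.re = 0 := rfl
@[simp] lemma qk_imI : qk.imI = 0 := rfl
@[simp] lemma qk_imJ : qk.imJ = 0 := rfl
@[simp] lemma qk_imK : qk.imK = 1 := rfl

/-- `cq` as an additive monoid homomorphism. -/
def cqHom : ℂ →+ Quaternion ℝ where
  toFun := cq
  map_zero' := by simp [Quaternion.ext_iff, Quaternion.re_zero, Quaternion.imI_zero, Quaternion.imJ_zero, Quaternion.imK_zero]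
  map_add' := by intro x y; simp [Quaternion.ext_iff]

lemma key_mul (a b c d : ℂ) :
    (cq a + cq b * qj) * star (cq c + cq d * qj) =
      cq (a * star c + b * star d) + cq (b * c - a * d) * qj := by
  simp only [Complex.star_def, cq_re, cq_imI, cq_imJ, cq_imK, qj_re, qj_imI, qj_imJ, qj_imK,
    Quaternion.ext_iff, Quaternion.re_mul,
    Quaternion.imI_mul, Quaternion.imJ_mul, Quaternion.imK_mul, Quaternion.re_add,
    Quaternion.imI_add, Quaternion.imJ_add, Quaternion.imK_add, Quaternion.re_star,
    Quaternion.imI_star, Quaternion.imJ_star, Quaternion.imK_star, Complex.add_re,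
    Complex.add_im, Complex.sub_re, Complex.sub_im, Complex.mul_re, Complex.mul_im,
    Complex.conj_re, Complex.conj_im]
  refine ⟨by ring, by ring, by ring, by ring⟩

lemma decomp (a b : ℂ) (q : Quaternion ℝ) (h : cq a + cq b * qj = q) :
    a = ⟨q.re, q.imI⟩ ∧ b = ⟨q.imJ, q.imK⟩ := by
  subst h
  constructor <;>
  · apply Complex.ext <;>
    simp [Quaternion.re_mul, Quaternion.imI_mul, Quaternion.imJ_mul, Quaternion.imK_mul]

lemma cq_zero_of (z w : ℂ) (h : cq z + cq w * qj = 0) : z = 0 := by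
  simp [Quaternion.re_mul, Quaternion.imI_mul, Quaternion.ext_iff, Complex.ext_iff,
    Quaternion.re_zero, Quaternion.imI_zero, Quaternion.imJ_zero, Quaternion.imK_zero] at h ⊢
  exact ⟨h.1, h.2.1⟩

theorem quaternary_pcp_from_basic_unit_pqa {M N : ℕ} [NeZero M] [NeZero N]
    (Ah Av : Matrix (ZMod M) (ZMod N) ℂ)
    (A : Matrix (ZMod M) (ZMod N) (Quaternion ℝ))
    (hA : ∀ k l, A k l = cq (Ah k l) + cq (Av k l) * qj)
    (halph : ∀ k l, A k l ∈ ({1, -1, qi, -qi, qj, -qj, qk, -qk} : Set (Quaternion ℝ)))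
    (hperf : ∀ m n, (m, n) ≠ (0, 0) → Rq A m n = 0) :
    (∀ k l, (Ah k l - Av k l ∈ ({1, Complex.I, -1, -Complex.I} : Set ℂ)) ∧
            (Ah k l + Av k l ∈ ({1, Complex.I, -1, -Complex.I} : Set ℂ))) ∧
    (∀ m n, (m, n) ≠ (0, 0) →
      Rc (Ah - Av) m n + Rc (Ah + Av) m n = 0) := by
  constructor
  · intro k l
    rcases halph k l with h | h | h | h | h | h | h | h <;>
    · obtain ⟨ha, hb⟩ := decomp _ _ _ ((hA k l).symm.trans h)
      rw [ha, hb]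
      constructor <;>
      norm_num [Set.mem_insert_iff, Complex.ext_iff, qi_re, qi_imI, qi_imJ, qi_imK, qj_re, qj_imI,
        qj_imJ, qj_imK, qk_re, qk_imI, qk_imJ, qk_imK, Quaternion.re_one, Quaternion.imI_one,
        Quaternion.imJ_one, Quaternion.imK_one,
        Complex.I_re, Complex.I_im]
  · intro m n hmn
    -- decomposition of the quaternion autocorrelation
    have h3 : Rq A m n = cq (Rc Ah m n + Rc Av m n) +
        cq (∑ k, ∑ l, (Av k l * Ah (k + m) (l + n) - Ah k l * Av (k + m) (l + n))) * qj := by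
      have step : Rq A m n = ∑ k, ∑ l,
          (cq (Ah k l * star (Ah (k + m) (l + n)) + Av k l * star (Av (k + m) (l + n))) +
           cq (Av k l * Ah (k + m) (l + n) - Ah k l * Av (k + m) (l + n)) * qj) := by
        simp only [Rq, qcorr]
        refine Finset.sum_congr rfl fun k _ => Finset.sum_congr rfl fun l _ => ?_
        rw [hA k l, hA (k + m) (l + n), key_mul]
      have hRc : Rc Ah m n + Rc Av m n = ∑ k, ∑ l,
          (Ah k l * star (Ah (k + m) (l + n)) + Av k l * star (Av (k + m) (l + n))) := by
        simp only [Rc, ccorr, ← Finset.sum_add_distrib]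
      rw [step, hRc]
      have hc : (cq : ℂ → Quaternion ℝ) = ⇑cqHom := rfl
      simp only [Finset.sum_add_distrib, ← Finset.sum_mul, hc, ← map_sum]
    have hz : Rc Ah m n + Rc Av m n = 0 := by
      apply cq_zero_of _ _ (h3 ▸ hperf m n hmn)
    have h2 : Rc (Ah - Av) m n + Rc (Ah + Av) m n = 2 * (Rc Ah m n + Rc Av m n) := by
      simp only [Rc, ccorr, Matrix.sub_apply, Matrix.add_apply, ← Finset.sum_add_distrib,
        Finset.mul_sum]
      refine Finset.sum_congr rfl fun k _ => Finset.sum_congr rfl fun l _ => ?_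
      simp only [star_sub, star_add]
      ring
    rw [h2, hz, mul_zero]
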